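/- Let h : [M] → [M] be a two-to-one function with M = FG and G ≥ F ≥ 400. Choose uniformly at random a pair of disjoint subsets S, T ⊆ [M] with |S| = F and |T| = G. Then the probability that there exist s ∈ S and t ∈ T with h(s) = h(t) is greater than 0.2. -/

import Mathlib

open Finset

section Hlp
open Finset Nat

variable {α β : Type*} [DecidableEq α] [DecidableEq β]

lemma card_filter_product (s : Finset α) (t : Finset β) (P : α → β → Prop)
    [∀ a b, Decidable (P a b)] :
    ((s ×ˢ t).filter fun p => P p.1 p.2).card = ∑ a ∈ s, (t.filter (P a)).card := by
  have : ((s ×ˢ t).filter fun p => P p.1 p.2)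
      = s.biUnion (fun a => ({a} ×ˢ (t.filter (P a)))) := by
    ext ⟨a, b⟩
    simp only [mem_filter, mem_product, mem_biUnion, mem_singleton]
    constructor
    · rintro ⟨⟨ha, hb⟩, hP⟩; exact ⟨a, ha, rfl, hb, hP⟩
    · rintro ⟨a', ha', rfl, hb, hP⟩; exact ⟨⟨ha', hb⟩, hP⟩
  rw [this, card_biUnion]
  · simp
  · intro i hi j hj hij
    simp only [disjoint_left]
    rintro ⟨a, b⟩ hab hab'
    simp only [mem_product, mem_singleton] at hab hab'
    exact hij (hab.1 ▸ hab'.1 ▸ rfl)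

lemma count_disj (U : Finset α) (f g : ℕ) :
    (((U.powersetCard f) ×ˢ (U.powersetCard g)).filter fun p => Disjoint p.1 p.2).card
      = (U.card.choose f) * ((U.card - f).choose g) := by
  rw [card_filter_product]
  rw [Finset.sum_congr rfl (g := fun _ => (U.card - f).choose g)]
  · rw [sum_const, card_powersetCard, smul_eq_mul]
  · intro S hS
    rw [mem_powersetCard] at hS
    have : (U.powersetCard g).filter (fun T => Disjoint S T) = (U \ S).powersetCard g := by
      ext T
      simp only [mem_filter, mem_powersetCard, subset_sdiff]
      constructor
      · rintro ⟨⟨h1, h2⟩, h3⟩; exact ⟨⟨h1, h3.symm⟩, h2⟩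
      · rintro ⟨⟨h1, h3⟩, h2⟩; exact ⟨⟨h1, h2⟩, h3.symm⟩
    rw [this, card_powersetCard, card_sdiff_of_subset hS.1, hS.2]
variable {α : Type*} [DecidableEq α]

lemma count_presc (U : Finset α) (f g : ℕ) (P Q : Finset α)
    (hPU : P ⊆ U) (hQU : Q ⊆ U) (hPQ : Disjoint P Q) (hPf : P.card ≤ f) (hQg : Q.card ≤ g) :
    (((U.powersetCard f) ×ˢ (U.powersetCard g)).filter
        fun p => Disjoint p.1 p.2 ∧ P ⊆ p.1 ∧ Q ⊆ p.2).card
      = ((U.card - P.card - Q.card).choose (f - P.card)) *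
        ((U.card - P.card - Q.card - (f - P.card)).choose (g - Q.card)) := by
  classical
  set U' := U \ (P ∪ Q) with hU'
  have hU'card : U'.card = U.card - P.card - Q.card := by
    rw [hU', card_sdiff_of_subset (union_subset hPU hQU), card_union_of_disjoint hPQ]
    omega
  rw [← hU'card, ← count_disj U' (f - P.card) (g - Q.card)]
  apply card_nbij' (fun p => (p.1 \ P, p.2 \ Q)) (fun p => (p.1 ∪ P, p.2 ∪ Q))
  · rintro ⟨S, T⟩ hST
    simp only [mem_coe, mem_filter, mem_product, mem_powersetCard] at hST ⊢
    obtain ⟨⟨⟨hSU, hSf⟩, hTU, hTg⟩, hd, hPS, hQT⟩ := hST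
    have hSQ : Disjoint S Q := Finset.disjoint_of_subset_right hQT hd
    have hTP : Disjoint T P := Finset.disjoint_of_subset_right hPS hd.symm
    refine ⟨⟨⟨?_, ?_⟩, ?_, ?_⟩, ?_⟩
    · rw [hU']; intro x hx
      simp only [mem_sdiff, mem_union] at hx ⊢
      exact ⟨hSU hx.1, fun hc => hc.elim hx.2 (fun hq => disjoint_left.mp hSQ hx.1 hq)⟩
    · rw [card_sdiff_of_subset hPS, hSf]
    · rw [hU']; intro x hx
      simp only [mem_sdiff, mem_union] at hx ⊢
      exact ⟨hTU hx.1, fun hc => hc.elim (fun hp => disjoint_left.mp hTP hx.1 hp) hx.2⟩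
    · rw [card_sdiff_of_subset hQT, hTg]
    · exact hd.mono sdiff_subset sdiff_subset
  · rintro ⟨S', T'⟩ hST
    simp only [mem_coe, mem_filter, mem_product, mem_powersetCard] at hST ⊢
    obtain ⟨⟨⟨hSU, hSf⟩, hTU, hTg⟩, hd⟩ := hST
    have hS'PQ : Disjoint S' (P ∪ Q) := Finset.disjoint_of_subset_left hSU sdiff_disjoint
    have hT'PQ : Disjoint T' (P ∪ Q) := Finset.disjoint_of_subset_left hTU sdiff_disjoint
    have hS'P : Disjoint S' P := hS'PQ.mono_right subset_union_left
    have hS'Q : Disjoint S' Q := hS'PQ.mono_right subset_union_right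
    have hT'P : Disjoint T' P := hT'PQ.mono_right subset_union_left
    have hT'Q : Disjoint T' Q := hT'PQ.mono_right subset_union_right
    refine ⟨⟨⟨?_, ?_⟩, ?_, ?_⟩, ?_, ?_, ?_⟩
    · exact union_subset (hSU.trans sdiff_subset) hPU
    · rw [card_union_of_disjoint hS'P, hSf]; omega
    · exact union_subset (hTU.trans sdiff_subset) hQU
    · rw [card_union_of_disjoint hT'Q, hTg]; omega
    · rw [disjoint_union_left, disjoint_union_right, disjoint_union_right]
      exact ⟨⟨hd, hS'Q⟩, hT'P.symm, hPQ⟩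
    · exact subset_union_right
    · exact subset_union_right
  · rintro ⟨S, T⟩ hST
    simp only [mem_coe, mem_filter, mem_product, mem_powersetCard] at hST
    obtain ⟨_, _, hPS, hQT⟩ := hST
    simp only [Prod.mk.injEq]
    exact ⟨sdiff_union_of_subset hPS, sdiff_union_of_subset hQT⟩
  · rintro ⟨S', T'⟩ hST
    simp only [mem_coe, mem_filter, mem_product, mem_powersetCard] at hST
    obtain ⟨⟨⟨hSU, _⟩, hTU, _⟩, _⟩ := hST
    have hS'P : Disjoint S' P :=
      (Finset.disjoint_of_subset_left hSU sdiff_disjoint).mono_right subset_union_left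
    have hT'Q : Disjoint T' Q :=
      (Finset.disjoint_of_subset_left hTU sdiff_disjoint).mono_right subset_union_right
    simp only [Prod.mk.injEq]
    exact ⟨union_sdiff_cancel_right hS'P, union_sdiff_cancel_right hT'Q⟩
lemma count_two (U : Finset α) (f g : ℕ) (hf : 1 ≤ f) (hg : 1 ≤ g) (a b : α)
    (ha : a ∈ U) (hb : b ∈ U) (hab : a ≠ b) :
    (((U.powersetCard f) ×ˢ (U.powersetCard g)).filter
        fun p => Disjoint p.1 p.2 ∧ a ∈ p.1 ∧ b ∈ p.2).card
      = (U.card - 2).choose (f - 1) * ((U.card - 2) - (f - 1)).choose (g - 1) := by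
  have h := count_presc U f g {a} {b} (by simpa) (by simpa)
    (by simp [hab, Ne.symm hab]) (by simpa) (by simpa)
  simp only [card_singleton] at h
  rw [show U.card - 1 - 1 = U.card - 2 from by omega] at h
  rw [← h]
  congr 1
  apply Finset.filter_congr
  intro p _
  simp [singleton_subset_iff]

lemma count_four (U : Finset α) (f g : ℕ) (hf : 2 ≤ f) (hg : 2 ≤ g) (a c b d : α)
    (ha : a ∈ U) (hc : c ∈ U) (hb : b ∈ U) (hd : d ∈ U)
    (hac : a ≠ c) (hbd : b ≠ d) (hab : a ≠ b) (had : a ≠ d) (hcb : c ≠ b) (hcd : c ≠ d) :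
    (((U.powersetCard f) ×ˢ (U.powersetCard g)).filter
        fun p => Disjoint p.1 p.2 ∧ (a ∈ p.1 ∧ c ∈ p.1) ∧ (b ∈ p.2 ∧ d ∈ p.2)).card
      = (U.card - 4).choose (f - 2) * ((U.card - 4) - (f - 2)).choose (g - 2) := by
  have hP : ({a, c} : Finset α).card = 2 := by
    rw [card_insert_of_notMem (by simp [hac]), card_singleton]
  have hQ : ({b, d} : Finset α).card = 2 := by
    rw [card_insert_of_notMem (by simp [hbd]), card_singleton]
  have h := count_presc U f g {a, c} {b, d}
    (by simp [insert_subset_iff, ha, hc]) (by simp [insert_subset_iff, hb, hd])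
    (by simp only [disjoint_left, mem_insert, mem_singleton]
        rintro x (rfl | rfl) hx <;> rcases hx with (rfl | rfl) <;> simp_all) (by omega) (by omega)
  rw [hP, hQ] at h
  rw [show U.card - 2 - 2 = U.card - 4 from by omega] at h
  rw [← h]
  congr 1
  apply Finset.filter_congr
  intro p _
  simp only [insert_subset_iff, singleton_subset_iff]

lemma bonferroni {ι α : Type*} [DecidableEq α] [DecidableEq ι]
    (s : Finset ι) (A : ι → Finset α) :
    2 * ∑ i ∈ s, ((A i).card : ℝ) ≤ 2 * ((s.biUnion A).card : ℝ) +
      ∑ i ∈ s, ∑ j ∈ s, (if i = j then 0 else ((A i ∩ A j).card : ℝ)) := by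
  classical
  set U := s.biUnion A with hU
  have hsub : ∀ i ∈ s, A i ⊆ U := fun i hi => subset_biUnion_of_mem A hi
  set f : ι → α → ℝ := fun i x => if x ∈ A i then 1 else 0 with hf
  have h1 : ∀ i ∈ s, ((A i).card : ℝ) = ∑ x ∈ U, f i x := by
    intro i hi
    rw [hf]
    simp only [Finset.sum_boole]
    rw [Finset.filter_mem_eq_inter, inter_eq_right.mpr (hsub i hi)]
  have h2 : ∀ i ∈ s, ∀ j ∈ s, ((A i ∩ A j).card : ℝ) = ∑ x ∈ U, f i x * f j x := by
    intro i hi j hj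
    have he : ∀ x, f i x * f j x = if x ∈ A i ∩ A j then (1:ℝ) else 0 := by
      intro x; rw [hf]; simp only [mem_inter]; split_ifs <;> simp_all
    simp only [he, Finset.sum_boole]
    rw [Finset.filter_mem_eq_inter,
      inter_eq_right.mpr ((inter_subset_left).trans (hsub i hi))]
  have key : ∀ x, ((∑ i ∈ s, f i x) * (∑ j ∈ s, f j x) - ∑ i ∈ s, f i x)
      = ∑ i ∈ s, ∑ j ∈ s, (if i = j then 0 else f i x * f j x) := by
    intro x
    have hsq : ∀ i, f i x * f i x = f i x := by
      intro i; by_cases hx : x ∈ A i <;> simp [hf, hx]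
    have hrow : ∀ i ∈ s, ∑ j ∈ s, f i x * f j x
        = (∑ j ∈ s, if i = j then 0 else f i x * f j x) + f i x := by
      intro i hi
      calc ∑ j ∈ s, f i x * f j x
          = ∑ j ∈ s, ((if i = j then 0 else f i x * f j x) +
              (if i = j then f i x * f j x else 0)) := by
            apply Finset.sum_congr rfl; intro j _; split_ifs <;> ring
        _ = (∑ j ∈ s, if i = j then 0 else f i x * f j x) +
              ∑ j ∈ s, (if i = j then f i x * f j x else 0) := Finset.sum_add_distrib
        _ = (∑ j ∈ s, if i = j then 0 else f i x * f j x) + f i x := by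
            rw [Finset.sum_ite_eq s i (fun j => f i x * f j x), if_pos hi, hsq]
    rw [Finset.sum_mul_sum, Finset.sum_congr rfl hrow, Finset.sum_add_distrib]
    ring
  calc 2 * ∑ i ∈ s, ((A i).card : ℝ)
      = ∑ x ∈ U, 2 * ∑ i ∈ s, f i x := by
        rw [Finset.sum_congr rfl h1, Finset.sum_comm, Finset.mul_sum]
    _ ≤ ∑ x ∈ U, (2 + ((∑ i ∈ s, f i x) * (∑ j ∈ s, f j x) - ∑ i ∈ s, f i x)) := by
        apply Finset.sum_le_sum
        intro x hx
        have hcast : ∑ i ∈ s, f i x = ((s.filter (fun i => x ∈ A i)).card : ℝ) := by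
          simp only [hf, Finset.sum_boole]
        set n := (s.filter (fun i => x ∈ A i)).card with hn
        have hd1 : 1 ≤ n := by
          obtain ⟨i, hi, hxi⟩ := mem_biUnion.mp hx
          exact Finset.card_pos.mpr ⟨i, mem_filter.mpr ⟨hi, hxi⟩⟩
        have hnn : 0 ≤ ((n:ℝ) - 1) * ((n:ℝ) - 2) := by
          rcases Nat.lt_or_ge n 2 with hlt | hge
          · interval_cases n <;> norm_num
          · have h2n : (2:ℝ) ≤ n := by exact_mod_cast hge
            nlinarith
        rw [hcast]
        nlinarith
    _ = 2 * ((U.card) : ℝ) +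
        ∑ x ∈ U, ((∑ i ∈ s, f i x) * (∑ j ∈ s, f j x) - ∑ i ∈ s, f i x) := by
        rw [Finset.sum_add_distrib, Finset.sum_const, nsmul_eq_mul, mul_comm]
    _ = 2 * ((U.card) : ℝ) +
        ∑ i ∈ s, ∑ j ∈ s, (if i = j then 0 else ((A i ∩ A j).card : ℝ)) := by
        congr 1
        simp only [key]
        rw [Finset.sum_comm]
        apply Finset.sum_congr rfl; intro i hi
        rw [Finset.sum_comm]
        apply Finset.sum_congr rfl; intro j hj
        split_ifs with hij
        · simp
        · exact (h2 i hi j hj).symm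

lemma ident1 (F G M : ℕ) (hF : 1 ≤ F) (hG : 1 ≤ G) (hFGM : F + G ≤ M) :
    M * (M-1) * ((M-2).choose (F-1) * ((M-2)-(F-1)).choose (G-1))
      = F * G * (M.choose F * (M-F).choose G) := by
  obtain ⟨F', rfl⟩ : ∃ F', F = F' + 1 := ⟨F - 1, by omega⟩
  obtain ⟨G', rfl⟩ : ∃ G', G = G' + 1 := ⟨G - 1, by omega⟩
  obtain ⟨M', rfl⟩ : ∃ M', M = M' + 2 := ⟨M - 2, by omega⟩
  have h1 : F' ≤ M' := by omega
  have h2 : G' ≤ M' - F' := by omega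
  have h3 : F' + 1 ≤ M' + 2 := by omega
  have h4 : G' + 1 ≤ M' + 1 - F' := by omega
  rw [show M' + 2 - 1 = M' + 1 from by omega, show M' + 2 - 2 = M' from by omega,
    show F' + 1 - 1 = F' from by omega, show G' + 1 - 1 = G' from by omega,
    show M' + 2 - (F' + 1) = M' + 1 - F' from by omega]
  have c1 := Nat.choose_mul_factorial_mul_factorial h1
  have c2 := Nat.choose_mul_factorial_mul_factorial h2
  have c3 := Nat.choose_mul_factorial_mul_factorial h3
  have c4 := Nat.choose_mul_factorial_mul_factorial h4
  rw [show M' + 2 - (F' + 1) = M' + 1 - F' from by omega] at c3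
  rw [show M' + 1 - F' - (G' + 1) = M' - F' - G' from by omega] at c4
  apply Nat.eq_of_mul_eq_mul_right
    (show 0 < F'.factorial * (G'.factorial * (M' - F' - G').factorial) by positivity)
  have lhs : (M' + 2) * (M' + 1) * (M'.choose F' * (M' - F').choose G') *
      (F'.factorial * (G'.factorial * (M' - F' - G').factorial)) = (M' + 2).factorial := by
    calc (M' + 2) * (M' + 1) * (M'.choose F' * (M' - F').choose G') *
          (F'.factorial * (G'.factorial * (M' - F' - G').factorial))
        = (M' + 2) * (M' + 1) * (M'.choose F' * F'.factorial) *
            ((M' - F').choose G' * G'.factorial * (M' - F' - G').factorial) := by ring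
      _ = (M' + 2) * (M' + 1) * (M'.choose F' * F'.factorial) * (M' - F').factorial := by
            rw [c2]
      _ = (M' + 2) * (M' + 1) * (M'.choose F' * F'.factorial * (M' - F').factorial) := by
            ring
      _ = (M' + 2) * (M' + 1) * M'.factorial := by rw [c1]
      _ = (M' + 2).factorial := by
            rw [Nat.factorial_succ, Nat.factorial_succ]; ring
  have rhs : (F' + 1) * (G' + 1) * ((M' + 2).choose (F' + 1) * (M' + 1 - F').choose (G' + 1)) *
      (F'.factorial * (G'.factorial * (M' - F' - G').factorial)) = (M' + 2).factorial := by
    calc (F' + 1) * (G' + 1) * ((M' + 2).choose (F' + 1) * (M' + 1 - F').choose (G' + 1)) *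
          (F'.factorial * (G'.factorial * (M' - F' - G').factorial))
        = ((M' + 2).choose (F' + 1) * ((F' + 1) * F'.factorial)) *
            ((M' + 1 - F').choose (G' + 1) * ((G' + 1) * G'.factorial) *
              (M' - F' - G').factorial) := by ring
      _ = ((M' + 2).choose (F' + 1) * (F' + 1).factorial) *
            ((M' + 1 - F').choose (G' + 1) * (G' + 1).factorial *
              (M' - F' - G').factorial) := by rw [Nat.factorial_succ, Nat.factorial_succ]
      _ = ((M' + 2).choose (F' + 1) * (F' + 1).factorial) * (M' + 1 - F').factorial := by
            rw [c4]
      _ = (M' + 2).choose (F' + 1) * (F' + 1).factorial * (M' + 1 - F').factorial := by ring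
      _ = (M' + 2).factorial := by rw [c3]
  rw [lhs, rhs]

lemma ident2 (F G M : ℕ) (hF : 2 ≤ F) (hG : 2 ≤ G) (hFGM : F + G ≤ M) :
    M * (M-1) * (M-2) * (M-3) * ((M-4).choose (F-2) * ((M-4)-(F-2)).choose (G-2))
      = F * (F-1) * G * (G-1) * (M.choose F * (M-F).choose G) := by
  obtain ⟨F', rfl⟩ : ∃ F', F = F' + 2 := ⟨F - 2, by omega⟩
  obtain ⟨G', rfl⟩ : ∃ G', G = G' + 2 := ⟨G - 2, by omega⟩
  obtain ⟨M', rfl⟩ : ∃ M', M = M' + 4 := ⟨M - 4, by omega⟩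
  have h1 : F' ≤ M' := by omega
  have h2 : G' ≤ M' - F' := by omega
  have h3 : F' + 2 ≤ M' + 4 := by omega
  have h4 : G' + 2 ≤ M' + 2 - F' := by omega
  rw [show M' + 4 - 1 = M' + 3 from by omega, show M' + 4 - 2 = M' + 2 from by omega,
    show M' + 4 - 3 = M' + 1 from by omega, show M' + 4 - 4 = M' from by omega,
    show F' + 2 - 2 = F' from by omega, show G' + 2 - 2 = G' from by omega,
    show F' + 2 - 1 = F' + 1 from by omega, show G' + 2 - 1 = G' + 1 from by omega,
    show M' + 4 - (F' + 2) = M' + 2 - F' from by omega]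
  have c1 := Nat.choose_mul_factorial_mul_factorial h1
  have c2 := Nat.choose_mul_factorial_mul_factorial h2
  have c3 := Nat.choose_mul_factorial_mul_factorial h3
  have c4 := Nat.choose_mul_factorial_mul_factorial h4
  rw [show M' + 4 - (F' + 2) = M' + 2 - F' from by omega] at c3
  rw [show M' + 2 - F' - (G' + 2) = M' - F' - G' from by omega] at c4
  apply Nat.eq_of_mul_eq_mul_right
    (show 0 < F'.factorial * (G'.factorial * (M' - F' - G').factorial) by positivity)
  have lhs : (M' + 4) * (M' + 3) * (M' + 2) * (M' + 1) *
      (M'.choose F' * (M' - F').choose G') *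
      (F'.factorial * (G'.factorial * (M' - F' - G').factorial)) = (M' + 4).factorial := by
    calc (M' + 4) * (M' + 3) * (M' + 2) * (M' + 1) *
          (M'.choose F' * (M' - F').choose G') *
          (F'.factorial * (G'.factorial * (M' - F' - G').factorial))
        = (M' + 4) * (M' + 3) * (M' + 2) * (M' + 1) * (M'.choose F' * F'.factorial) *
            ((M' - F').choose G' * G'.factorial * (M' - F' - G').factorial) := by ring
      _ = (M' + 4) * (M' + 3) * (M' + 2) * (M' + 1) * (M'.choose F' * F'.factorial) *
            (M' - F').factorial := by rw [c2]
      _ = (M' + 4) * (M' + 3) * (M' + 2) * (M' + 1) *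
            (M'.choose F' * F'.factorial * (M' - F').factorial) := by ring
      _ = (M' + 4) * (M' + 3) * (M' + 2) * (M' + 1) * M'.factorial := by rw [c1]
      _ = (M' + 4).factorial := by
            rw [Nat.factorial_succ, Nat.factorial_succ, Nat.factorial_succ,
              Nat.factorial_succ]; ring
  have rhs : (F' + 2) * (F' + 1) * (G' + 2) * (G' + 1) *
      ((M' + 4).choose (F' + 2) * (M' + 2 - F').choose (G' + 2)) *
      (F'.factorial * (G'.factorial * (M' - F' - G').factorial)) = (M' + 4).factorial := by
    calc (F' + 2) * (F' + 1) * (G' + 2) * (G' + 1) *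
          ((M' + 4).choose (F' + 2) * (M' + 2 - F').choose (G' + 2)) *
          (F'.factorial * (G'.factorial * (M' - F' - G').factorial))
        = ((M' + 4).choose (F' + 2) * ((F' + 2) * ((F' + 1) * F'.factorial))) *
            ((M' + 2 - F').choose (G' + 2) * ((G' + 2) * ((G' + 1) * G'.factorial)) *
              (M' - F' - G').factorial) := by ring
      _ = ((M' + 4).choose (F' + 2) * (F' + 2).factorial) *
            ((M' + 2 - F').choose (G' + 2) * (G' + 2).factorial *
              (M' - F' - G').factorial) := by
            rw [Nat.factorial_succ, Nat.factorial_succ, Nat.factorial_succ,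
              Nat.factorial_succ]
      _ = ((M' + 4).choose (F' + 2) * (F' + 2).factorial) * (M' + 2 - F').factorial := by
            rw [c4]
      _ = (M' + 4).choose (F' + 2) * (F' + 2).factorial * (M' + 2 - F').factorial := by ring
      _ = (M' + 4).factorial := by rw [c3]
  rw [lhs, rhs]

lemma key_ineq (F G M m : ℕ) (hF : 400 ≤ F) (hFG : F ≤ G) (hM : M = F * G)
    (hm : M = 2 * m) :
    M.choose F * (M - F).choose G
      + 10 * m * (m - 1) * ((M-4).choose (F-2) * ((M-4)-(F-2)).choose (G-2))
      < 10 * m * ((M-2).choose (F-1) * ((M-2)-(F-1)).choose (G-1)) := by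
  have hG : 400 ≤ G := le_trans hF hFG
  have hMbig : 160000 ≤ M := by
    rw [hM]; calc (160000:ℕ) = 400 * 400 := by norm_num
      _ ≤ F * G := Nat.mul_le_mul hF hG
  have hFGM : F + G ≤ M := by
    rw [hM]
    calc F + G ≤ G + G := by omega
      _ = 2 * G := by ring
      _ ≤ F * G := Nat.mul_le_mul (by omega) le_rfl
  have hmbig : 80000 ≤ m := by omega
  set N := M.choose F * (M - F).choose G with hN
  set C1 := (M-2).choose (F-1) * ((M-2)-(F-1)).choose (G-1) with hC1
  set C2 := (M-4).choose (F-2) * ((M-4)-(F-2)).choose (G-2) with hC2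
  have hNpos : 0 < N := Nat.mul_pos (Nat.choose_pos (by omega)) (Nat.choose_pos (by omega))
  have hI1 : M * (M-1) * C1 = F * G * N := ident1 F G M (by omega) (by omega) hFGM
  have hI2 : M * (M-1) * (M-2) * (M-3) * C2 = F * (F-1) * G * (G-1) * N :=
    ident2 F G M (by omega) (by omega) hFGM
  have hD : 0 < M * ((M-1) * ((M-2) * (M-3))) := by
    apply Nat.mul_pos (by omega); apply Nat.mul_pos (by omega)
    exact Nat.mul_pos (by omega) (by omega)
  -- the core polynomial inequality
  have hq : (F-1)*(G-1) + F + G = M + 1 := by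
    obtain ⟨f, rfl⟩ : ∃ f, F = f + 1 := ⟨F - 1, by omega⟩
    obtain ⟨g, rfl⟩ : ∃ g, G = g + 1 := ⟨G - 1, by omega⟩
    have : (f+1) * (g+1) = f*g + f + g + 1 := by ring
    simp only [Nat.add_sub_cancel]
    omega
  have hu : (F-1)*(G-1) ≤ M - 2 := by omega
  have E : (M-1)*(M-3) + 10*m*(m-1) < 10*m*(M-3) := by
    obtain ⟨k, rfl⟩ : ∃ k, m = k + 80000 := ⟨m - 80000, by omega⟩
    rw [show M - 1 = 2*k + 159999 from by omega, show M - 3 = 2*k + 159997 from by omega,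
      show k + 80000 - 1 = k + 79999 from by omega]
    nlinarith
  have POLY : M*(M-1)*(M-2)*(M-3) + 10*m*(m-1)*(F*(F-1)*G*(G-1))
      < 10*m*((M-2)*(M-3)*(F*G)) := by
    have step1 : 10*m*(m-1)*(F*(F-1)*G*(G-1)) ≤ 10*m*(m-1)*(M*(M-2)) := by
      apply Nat.mul_le_mul_left
      calc F*(F-1)*G*(G-1) = ((F-1)*(G-1)) * (F * G) := by ring
        _ ≤ (M-2) * (F*G) := Nat.mul_le_mul_right _ hu
        _ = M * (M-2) := by rw [← hM]; ring
    have step2 : M*(M-1)*(M-2)*(M-3) + 10*m*(m-1)*(M*(M-2)) < 10*m*((M-2)*(M-3)*(F*G)) := by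
      rw [← hM]
      calc M*(M-1)*(M-2)*(M-3) + 10*m*(m-1)*(M*(M-2))
          = (M*(M-2)) * ((M-1)*(M-3) + 10*m*(m-1)) := by ring
        _ < (M*(M-2)) * (10*m*(M-3)) :=
            mul_lt_mul_of_pos_left E (Nat.mul_pos (by omega) (by omega))
        _ = 10*m*((M-2)*(M-3)*M) := by ring
    omega
  -- deduce the claim by multiplying by D := M*(M-1)*(M-2)*(M-3)
  have main : (N + 10*m*(m-1)*C2) * (M*(M-1)*(M-2)*(M-3))
      < (10*m*C1) * (M*(M-1)*(M-2)*(M-3)) := by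
    calc (N + 10*m*(m-1)*C2) * (M*(M-1)*(M-2)*(M-3))
        = N * (M*(M-1)*(M-2)*(M-3)) + 10*m*(m-1)*(M*(M-1)*(M-2)*(M-3)*C2) := by ring
      _ = N * (M*(M-1)*(M-2)*(M-3)) + 10*m*(m-1)*(F*(F-1)*G*(G-1)*N) := by rw [hI2]
      _ = (M*(M-1)*(M-2)*(M-3) + 10*m*(m-1)*(F*(F-1)*G*(G-1))) * N := by ring
      _ < (10*m*((M-2)*(M-3)*(F*G))) * N := mul_lt_mul_of_pos_right POLY hNpos
      _ = 10*m*((M-2)*(M-3))*(F*G*N) := by ring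
      _ = 10*m*((M-2)*(M-3))*(M*(M-1)*C1) := by rw [hI1]
      _ = (10*m*C1) * (M*(M-1)*(M-2)*(M-3)) := by ring
  exact Nat.lt_of_mul_lt_mul_right main

end Hlp

open Classical in
theorem stmt2 (F G M : ℕ) (hF : 400 ≤ F) (hFG : F ≤ G) (hM : M = F * G)
    (h : Fin M → Fin M)
    (htwo : ∀ i : Fin M, (Finset.univ.filter (fun i' => h i' = h i)).card = 2) :
    let pairs := (Finset.powersetCard F (Finset.univ : Finset (Fin M)) ×ˢ
        Finset.powersetCard G (Finset.univ : Finset (Fin M))).filter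
        (fun p => Disjoint p.1 p.2)
    ((pairs.filter (fun p => ∃ s ∈ p.1, ∃ t ∈ p.2, h s = h t)).card : ℝ) /
      (pairs.card : ℝ) > 0.2 := by
  classical
  intro pairs
  have hpairs : pairs = (Finset.powersetCard F (Finset.univ : Finset (Fin M)) ×ˢ
      Finset.powersetCard G (Finset.univ : Finset (Fin M))).filter
      (fun p => Disjoint p.1 p.2) := rfl
  have hG : 400 ≤ G := le_trans hF hFG
  have hMbig : 160000 ≤ M := by
    rw [hM]
    calc (160000:ℕ) = 400 * 400 := by norm_num
      _ ≤ F * G := Nat.mul_le_mul hF hG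
  have hFGM : F + G ≤ M := by
    rw [hM]
    calc F + G ≤ G + G := by omega
      _ = 2 * G := by ring
      _ ≤ F * G := Nat.mul_le_mul (by omega) le_rfl
  -- fibers
  set I : Finset (Fin M) := Finset.univ.image h with hI
  set fib : Fin M → Finset (Fin M) := fun v => Finset.univ.filter (fun i => h i = v)
    with hfib
  have hfib2 : ∀ v ∈ I, (fib v).card = 2 := by
    intro v hv
    obtain ⟨i, _, rfl⟩ := Finset.mem_image.mp hv
    exact htwo i
  have hdisjfib : ∀ x ∈ I, ∀ y ∈ I, x ≠ y → Disjoint (fib x) (fib y) := by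
    intro x _ y _ hxy
    simp only [hfib, disjoint_left, mem_filter, mem_univ, true_and]
    rintro a rfl hay
    exact hxy hay
  have huniv : (Finset.univ : Finset (Fin M)) = I.biUnion fib := by
    ext i
    simp only [mem_univ, true_iff, Finset.mem_biUnion]
    exact ⟨h i, by simp [hI], by simp [hfib]⟩
  set m := I.card with hmdef
  have hm2 : M = 2 * m := by
    have h1 : (Finset.univ : Finset (Fin M)).card = M := by simp
    rw [huniv, Finset.card_biUnion hdisjfib, Finset.sum_congr rfl hfib2,
      Finset.sum_const, smul_eq_mul] at h1
    omega
  have hmpos : 1 ≤ m := by omega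
  -- numbers
  set C1 := (M-2).choose (F-1) * ((M-2)-(F-1)).choose (G-1) with hC1
  set C2 := (M-4).choose (F-2) * ((M-4)-(F-2)).choose (G-2) with hC2
  set N := M.choose F * (M - F).choose G with hN
  have hNcard : pairs.card = N := by
    rw [hpairs]
    have := count_disj (Finset.univ : Finset (Fin M)) F G
    simpa using this
  have hNpos : 0 < N :=
    Nat.mul_pos (Nat.choose_pos (by omega)) (Nat.choose_pos (by omega))
  -- events
  set A : Fin M → Finset (Finset (Fin M) × Finset (Fin M)) :=
    fun v => pairs.filter (fun p => ∃ s ∈ p.1, ∃ t ∈ p.2, h s = v ∧ h t = v) with hA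
  have hunion : pairs.filter (fun p => ∃ s ∈ p.1, ∃ t ∈ p.2, h s = h t) = I.biUnion A := by
    ext p
    simp only [hA, Finset.mem_biUnion, Finset.mem_filter, hI, Finset.mem_image]
    constructor
    · rintro ⟨hp, s, hs, t, ht, hst⟩
      exact ⟨h s, ⟨s, mem_univ s, rfl⟩, hp, s, hs, t, ht, rfl, hst.symm⟩
    · rintro ⟨v, _, hp, s, hs, t, ht, hsv, htv⟩
      exact ⟨hp, s, hs, t, ht, hsv.trans htv.symm⟩
  -- fiber elements
  have hfibmem : ∀ v ∈ I, ∀ a b : Fin M, a ≠ b → fib v = {a, b} →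
      h a = v ∧ h b = v := by
    intro v _ a b _ hfv
    constructor
    · have : a ∈ fib v := by rw [hfv]; simp
      simpa [hfib] using this
    · have : b ∈ fib v := by rw [hfv]; simp
      simpa [hfib] using this
  -- reduction of A v to explicit membership form
  have hAform : ∀ v ∈ I, ∀ a b : Fin M, a ≠ b → fib v = {a, b} →
      A v = pairs.filter (fun p => (a ∈ p.1 ∧ b ∈ p.2) ∨ (b ∈ p.1 ∧ a ∈ p.2)) := by
    intro v hv a b hab hfv
    obtain ⟨hav, hbv⟩ := hfibmem v hv a b hab hfv
    rw [hA]
    apply Finset.filter_congr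
    intro p hp
    have hd : Disjoint p.1 p.2 := by
      rw [hpairs] at hp; exact (Finset.mem_filter.mp hp).2
    constructor
    · rintro ⟨s, hs, t, ht, hsv, htv⟩
      have hsf : s ∈ ({a, b} : Finset (Fin M)) := by
        rw [← hfv, hfib]; exact mem_filter.mpr ⟨mem_univ _, hsv⟩
      have htf : t ∈ ({a, b} : Finset (Fin M)) := by
        rw [← hfv, hfib]; exact mem_filter.mpr ⟨mem_univ _, htv⟩
      have hst : s ≠ t := by
        rintro rfl; exact (disjoint_left.mp hd hs) ht
      simp only [mem_insert, mem_singleton] at hsf htf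
      rcases hsf with rfl | rfl <;> rcases htf with rfl | rfl
      · exact absurd rfl hst
      · exact Or.inl ⟨hs, ht⟩
      · exact Or.inr ⟨hs, ht⟩
      · exact absurd rfl hst
    · rintro (⟨h1, h2⟩ | ⟨h1, h2⟩)
      · exact ⟨a, h1, b, h2, hav, hbv⟩
      · exact ⟨b, h1, a, h2, hbv, hav⟩
  have hMuniv : (Finset.univ : Finset (Fin M)).card = M := by simp
  -- card of A v
  have cardA : ∀ v ∈ I, (A v).card = 2 * C1 := by
    intro v hv
    obtain ⟨a, b, hab, hfv⟩ := Finset.card_eq_two.mp (hfib2 v hv)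
    rw [hAform v hv a b hab hfv, hpairs, Finset.filter_or]
    rw [Finset.card_union_of_disjoint]
    · rw [Finset.filter_filter, Finset.filter_filter]
      have e1 := count_two (Finset.univ : Finset (Fin M)) F G (by omega) (by omega)
        a b (mem_univ a) (mem_univ b) hab
      have e2 := count_two (Finset.univ : Finset (Fin M)) F G (by omega) (by omega)
        b a (mem_univ b) (mem_univ a) hab.symm
      rw [hMuniv] at e1 e2
      rw [e1, e2, hC1]
      ring
    · rw [Finset.disjoint_filter]
      rintro p hp ⟨ha1, hb2⟩ ⟨hb1, ha2⟩
      have hd : Disjoint p.1 p.2 := (Finset.mem_filter.mp hp).2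
      exact (disjoint_left.mp hd ha1) ha2
  -- card of intersections
  have cardAint : ∀ v ∈ I, ∀ w ∈ I, v ≠ w → (A v ∩ A w).card = 4 * C2 := by
    intro v hv w hw hvw
    obtain ⟨a, b, hab, hfv⟩ := Finset.card_eq_two.mp (hfib2 v hv)
    obtain ⟨c, d, hcd, hfw⟩ := Finset.card_eq_two.mp (hfib2 w hw)
    obtain ⟨hav, hbv⟩ := hfibmem v hv a b hab hfv
    obtain ⟨hcw, hdw⟩ := hfibmem w hw c d hcd hfw
    have hac : a ≠ c := by rintro rfl; exact hvw (hav.symm.trans hcw)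
    have had : a ≠ d := by rintro rfl; exact hvw (hav.symm.trans hdw)
    have hbc : b ≠ c := by rintro rfl; exact hvw (hbv.symm.trans hcw)
    have hbd : b ≠ d := by rintro rfl; exact hvw (hbv.symm.trans hdw)
    rw [hAform v hv a b hab hfv, hAform w hw c d hcd hfw, ← Finset.filter_and]
    have hcongr : pairs.filter (fun p =>
        ((a ∈ p.1 ∧ b ∈ p.2) ∨ (b ∈ p.1 ∧ a ∈ p.2)) ∧
        ((c ∈ p.1 ∧ d ∈ p.2) ∨ (d ∈ p.1 ∧ c ∈ p.2)))
        = pairs.filter (fun p =>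
          ((a ∈ p.1 ∧ c ∈ p.1) ∧ (b ∈ p.2 ∧ d ∈ p.2)) ∨
          (((a ∈ p.1 ∧ d ∈ p.1) ∧ (b ∈ p.2 ∧ c ∈ p.2)) ∨
          (((b ∈ p.1 ∧ c ∈ p.1) ∧ (a ∈ p.2 ∧ d ∈ p.2)) ∨
          ((b ∈ p.1 ∧ d ∈ p.1) ∧ (a ∈ p.2 ∧ c ∈ p.2))))) := by
      apply Finset.filter_congr
      intro p _
      constructor
      · rintro ⟨(⟨h1, h2⟩ | ⟨h1, h2⟩), (⟨h3, h4⟩ | ⟨h3, h4⟩)⟩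
        · exact Or.inl ⟨⟨h1, h3⟩, h2, h4⟩
        · exact Or.inr (Or.inl ⟨⟨h1, h3⟩, h2, h4⟩)
        · exact Or.inr (Or.inr (Or.inl ⟨⟨h1, h3⟩, h2, h4⟩))
        · exact Or.inr (Or.inr (Or.inr ⟨⟨h1, h3⟩, h2, h4⟩))
      · rintro (⟨⟨h1, h3⟩, h2, h4⟩ | ⟨⟨h1, h3⟩, h2, h4⟩ | ⟨⟨h1, h3⟩, h2, h4⟩ |
          ⟨⟨h1, h3⟩, h2, h4⟩)
        · exact ⟨Or.inl ⟨h1, h2⟩, Or.inl ⟨h3, h4⟩⟩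
        · exact ⟨Or.inl ⟨h1, h2⟩, Or.inr ⟨h3, h4⟩⟩
        · exact ⟨Or.inr ⟨h1, h2⟩, Or.inl ⟨h3, h4⟩⟩
        · exact ⟨Or.inr ⟨h1, h2⟩, Or.inr ⟨h3, h4⟩⟩
    rw [hcongr]
    have hdmem : ∀ p ∈ pairs, Disjoint p.1 p.2 := by
      intro p hp; rw [hpairs] at hp; exact (Finset.mem_filter.mp hp).2
    rw [Finset.filter_or, Finset.filter_or, Finset.filter_or]
    have hD34 : Disjoint
        (pairs.filter (fun p => (b ∈ p.1 ∧ c ∈ p.1) ∧ (a ∈ p.2 ∧ d ∈ p.2)))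
        (pairs.filter (fun p => (b ∈ p.1 ∧ d ∈ p.1) ∧ (a ∈ p.2 ∧ c ∈ p.2))) := by
      rw [Finset.disjoint_filter]
      rintro p hp ⟨⟨-, h3⟩, -, -⟩ ⟨⟨-, -⟩, -, h4⟩
      exact (disjoint_left.mp (hdmem p hp) h3) h4
    have hD2 : Disjoint
        (pairs.filter (fun p => (a ∈ p.1 ∧ d ∈ p.1) ∧ (b ∈ p.2 ∧ c ∈ p.2)))
        ((pairs.filter (fun p => (b ∈ p.1 ∧ c ∈ p.1) ∧ (a ∈ p.2 ∧ d ∈ p.2))) ∪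
         (pairs.filter (fun p => (b ∈ p.1 ∧ d ∈ p.1) ∧ (a ∈ p.2 ∧ c ∈ p.2)))) := by
      rw [Finset.disjoint_union_right]
      constructor <;>
        · rw [Finset.disjoint_filter]
          rintro p hp ⟨⟨h1, -⟩, -, -⟩ ⟨-, h2, -⟩
          exact (disjoint_left.mp (hdmem p hp) h1) h2
    have hD1 : Disjoint
        (pairs.filter (fun p => (a ∈ p.1 ∧ c ∈ p.1) ∧ (b ∈ p.2 ∧ d ∈ p.2)))
        ((pairs.filter (fun p => (a ∈ p.1 ∧ d ∈ p.1) ∧ (b ∈ p.2 ∧ c ∈ p.2))) ∪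
         ((pairs.filter (fun p => (b ∈ p.1 ∧ c ∈ p.1) ∧ (a ∈ p.2 ∧ d ∈ p.2))) ∪
          (pairs.filter (fun p => (b ∈ p.1 ∧ d ∈ p.1) ∧ (a ∈ p.2 ∧ c ∈ p.2))))) := by
      rw [Finset.disjoint_union_right, Finset.disjoint_union_right]
      refine ⟨?_, ?_, ?_⟩
      · rw [Finset.disjoint_filter]
        rintro p hp ⟨-, -, h4⟩ ⟨⟨-, h3⟩, -⟩
        exact (disjoint_left.mp (hdmem p hp) h3) h4
      · rw [Finset.disjoint_filter]
        rintro p hp ⟨-, h2, -⟩ ⟨⟨h1, -⟩, -⟩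
        exact (disjoint_left.mp (hdmem p hp) h1) h2
      · rw [Finset.disjoint_filter]
        rintro p hp ⟨-, h2, -⟩ ⟨⟨h1, -⟩, -⟩
        exact (disjoint_left.mp (hdmem p hp) h1) h2
    rw [Finset.card_union_of_disjoint hD1, Finset.card_union_of_disjoint hD2,
      Finset.card_union_of_disjoint hD34]
    have key : ∀ x y z u : Fin M, x ≠ y → z ≠ u → x ≠ z → x ≠ u → y ≠ z → y ≠ u →
        (pairs.filter (fun p => (x ∈ p.1 ∧ y ∈ p.1) ∧ (z ∈ p.2 ∧ u ∈ p.2))).card = C2 := by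
      intro x y z u hxy hzu hxz hxu hyz hyu
      rw [hpairs, Finset.filter_filter]
      have := count_four (Finset.univ : Finset (Fin M)) F G (by omega) (by omega)
        x y z u (mem_univ x) (mem_univ y) (mem_univ z) (mem_univ u)
        hxy hzu hxz hxu hyz hyu
      rw [hMuniv] at this
      rw [this, hC2]
    rw [key a c b d hac hbd hab had hbc.symm hcd,
      key a d b c had hbc hab hac hbd.symm hcd.symm,
      key b c a d hbc had hab.symm hbd hac.symm hcd,
      key b d a c hbd hac hab.symm hbc had.symm hcd.symm]
    ring
  -- Bonferroni
  have hbon := bonferroni I A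
  rw [← hunion] at hbon
  have hsum1 : ∑ v ∈ I, ((A v).card : ℝ) = (m : ℝ) * ((2 * C1 : ℕ) : ℝ) := by
    rw [Finset.sum_congr rfl (fun v hv => by rw [cardA v hv]),
      Finset.sum_const, nsmul_eq_mul]
  have hinner : ∀ v ∈ I, ∑ w ∈ I, (if v = w then (0:ℝ) else ((A v ∩ A w).card : ℝ))
      = ((m - 1 : ℕ) : ℝ) * ((4 * C2 : ℕ) : ℝ) := by
    intro v hv
    calc ∑ w ∈ I, (if v = w then (0:ℝ) else ((A v ∩ A w).card : ℝ))
        = ∑ w ∈ I, (((4 * C2 : ℕ) : ℝ) - (if v = w then ((4 * C2 : ℕ) : ℝ) else 0)) := by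
          apply Finset.sum_congr rfl
          intro w hw
          by_cases hvw : v = w
          · simp [hvw]
          · rw [if_neg hvw, if_neg hvw, cardAint v hv w hw hvw]; ring
      _ = (m : ℝ) * ((4 * C2 : ℕ) : ℝ) - ((4 * C2 : ℕ) : ℝ) := by
          rw [Finset.sum_sub_distrib, Finset.sum_const, nsmul_eq_mul,
            Finset.sum_ite_eq I v (fun _ => ((4 * C2 : ℕ) : ℝ)), if_pos hv]
      _ = ((m - 1 : ℕ) : ℝ) * ((4 * C2 : ℕ) : ℝ) := by
          rw [Nat.cast_sub hmpos]; push_cast; ring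
  have hsum2 : ∑ v ∈ I, ∑ w ∈ I, (if v = w then (0:ℝ) else ((A v ∩ A w).card : ℝ))
      = (m : ℝ) * (((m - 1 : ℕ) : ℝ) * ((4 * C2 : ℕ) : ℝ)) := by
    rw [Finset.sum_congr rfl hinner, Finset.sum_const, nsmul_eq_mul]
  rw [hsum1, hsum2] at hbon
  have hkey := key_ineq F G M m hF hFG hM hm2
  have hkeyR : ((N + 10 * m * (m - 1) * C2 : ℕ) : ℝ) < ((10 * m * C1 : ℕ) : ℝ) :=
    Nat.cast_lt.mpr hkey
  push_cast [Nat.cast_sub hmpos] at hkeyR hbon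
  have hNR : (0:ℝ) < (N : ℝ) := by exact_mod_cast hNpos
  rw [hNcard, gt_iff_lt, lt_div_iff₀ hNR]
  have h02 : (0.2 : ℝ) = 1/5 := by norm_num
  rw [h02]
  linarith
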